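/- Let a < b be real numbers, let f : [a,b] → ℝ be twice differentiable with real constants m and M such that m ≤ f''(x) ≤ M for all x ∈ [a,b], and let g : [a,b] → ℝ be integrable, nonnegative, and symmetric about (a+b)/2 (i.e. g(x) = g(a+b−x) for all x ∈ [a,b]). Then (m/8)·∫_a^b (2t−a−b)² g(t) dt ≤ ∫_a^b f(t)g(t) dt − f((a+b)/2)·∫_a^b g(t) dt ≤ (M/8)·∫_a^b (2t−a−b)² g(t) dt. -/

import Mathlib

open MeasureTheory intervalIntegral Set

lemma taylor_lower_aux {a b c : ℝ} {f f' f'' : ℝ → ℝ} (hc : c ∈ Set.Icc a b)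
    (hf' : ∀ x ∈ Set.Icc a b, HasDerivWithinAt f (f' x) (Set.Icc a b) x)
    (hf'' : ∀ x ∈ Set.Icc a b, HasDerivWithinAt f' (f'' x) (Set.Icc a b) x)
    (h0 : ∀ x ∈ Set.Icc a b, 0 ≤ f'' x) :
    ∀ x ∈ Set.Icc a b, 0 ≤ f x - f c - f' c * (x - c) := by
  have hmono : MonotoneOn f' (Set.Icc a b) := by
    apply monotoneOn_of_hasDerivWithinAt_nonneg (convex_Icc a b)
      (fun x hx => (hf'' x hx).continuousWithinAt)
      (fun x hx => ((hf'' x (interior_subset hx)).mono interior_subset))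
      (fun x hx => h0 x (interior_subset hx))
  set h : ℝ → ℝ := fun x => f x - f' c * x with hh
  have hd : ∀ x ∈ Set.Icc a b, HasDerivWithinAt h (f' x - f' c) (Set.Icc a b) x := by
    intro x hx
    exact ((hf' x hx).sub ((hasDerivWithinAt_id x _).const_mul (f' c))).congr_deriv (by ring)
  intro x hx
  have key : h c ≤ h x := by
    rcases le_total c x with hcx | hcx
    · have hmono2 : MonotoneOn h (Set.Icc c b) := by
        apply monotoneOn_of_hasDerivWithinAt_nonneg (convex_Icc c b)
          (fun y hy => ((hd y ⟨le_trans hc.1 hy.1, hy.2⟩).continuousWithinAt).mono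
            (Icc_subset_Icc hc.1 le_rfl))
          (fun y hy => ((hd y ⟨le_trans hc.1 (interior_subset hy).1,
            (interior_subset hy).2⟩).mono
            ((interior_subset.trans (Icc_subset_Icc hc.1 le_rfl)))))
          (fun y hy => sub_nonneg.2 (hmono hc ⟨le_trans hc.1 (interior_subset hy).1,
            (interior_subset hy).2⟩ (interior_subset hy).1))
      exact hmono2 ⟨le_rfl, hc.2⟩ ⟨hcx, hx.2⟩ hcx
    · have hanti : AntitoneOn h (Set.Icc a c) := by
        apply antitoneOn_of_hasDerivWithinAt_nonpos (convex_Icc a c)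
          (fun y hy => ((hd y ⟨hy.1, le_trans hy.2 hc.2⟩).continuousWithinAt).mono
            (Icc_subset_Icc le_rfl hc.2))
          (fun y hy => ((hd y ⟨(interior_subset hy).1,
            le_trans (interior_subset hy).2 hc.2⟩).mono
            ((interior_subset.trans (Icc_subset_Icc le_rfl hc.2)))))
          (fun y hy => sub_nonpos.2 (hmono ⟨(interior_subset hy).1,
            le_trans (interior_subset hy).2 hc.2⟩ hc (interior_subset hy).2))
      exact hanti ⟨hx.1, hcx⟩ ⟨hc.1, le_rfl⟩ hcx
  simp only [hh] at key
  nlinarith [key]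

/-- Two-sided Taylor bound. -/
lemma taylor_bounds_aux {a b c m M : ℝ} {f f' f'' : ℝ → ℝ} (hc : c ∈ Set.Icc a b)
    (hf' : ∀ x ∈ Set.Icc a b, HasDerivWithinAt f (f' x) (Set.Icc a b) x)
    (hf'' : ∀ x ∈ Set.Icc a b, HasDerivWithinAt f' (f'' x) (Set.Icc a b) x)
    (hm : ∀ x ∈ Set.Icc a b, m ≤ f'' x)
    (hM : ∀ x ∈ Set.Icc a b, f'' x ≤ M) :
    ∀ x ∈ Set.Icc a b, m / 2 * (x - c) ^ 2 ≤ f x - f c - f' c * (x - c) ∧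
      f x - f c - f' c * (x - c) ≤ M / 2 * (x - c) ^ 2 := by
  have hq : ∀ (r : ℝ), ∀ x ∈ Set.Icc a b,
      HasDerivWithinAt (fun y => r / 2 * (y - c) ^ 2) (r * (x - c)) (Set.Icc a b) x := by
    intro r x _
    have h1 : HasDerivAt (fun y : ℝ => r / 2 * (y - c) ^ 2) (r / 2 * (2 * (x - c))) x := by
      have := (((hasDerivAt_id x).sub_const c).pow 2).const_mul (r / 2)
      simpa using this
    have h2 : r / 2 * (2 * (x - c)) = r * (x - c) := by ring
    rw [h2] at h1
    exact h1.hasDerivWithinAt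
  have lower := taylor_lower_aux (f := fun x => f x - m / 2 * (x - c) ^ 2)
    (f' := fun x => f' x - m * (x - c)) (f'' := fun x => f'' x - m) hc
    (fun x hx => (hf' x hx).sub (hq m x hx))
    (fun x hx => ((hf'' x hx).sub (((hasDerivWithinAt_id x _).sub_const c).const_mul m)).congr_deriv (by ring))
    (fun x hx => sub_nonneg.2 (hm x hx))
  have upper := taylor_lower_aux (f := fun x => M / 2 * (x - c) ^ 2 - f x)
    (f' := fun x => M * (x - c) - f' x) (f'' := fun x => M - f'' x) hc
    (fun x hx => (hq M x hx).sub (hf' x hx))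
    (fun x hx => ((((hasDerivWithinAt_id x _).sub_const c).const_mul M).sub (hf'' x hx)).congr_deriv (by ring))
    (fun x hx => sub_nonneg.2 (hM x hx))
  intro x hx
  have l := lower x hx
  have u := upper x hx
  simp only [sub_self] at l u
  constructor <;> nlinarith [l, u]

theorem fejer_stmt_3 (a b : ℝ) (hab : a < b) (f f' f'' g : ℝ → ℝ) (m M : ℝ)
    (hf' : ∀ x ∈ Set.Icc a b, HasDerivWithinAt f (f' x) (Set.Icc a b) x)
    (hf'' : ∀ x ∈ Set.Icc a b, HasDerivWithinAt f' (f'' x) (Set.Icc a b) x)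
    (hm : ∀ x ∈ Set.Icc a b, m ≤ f'' x)
    (hM : ∀ x ∈ Set.Icc a b, f'' x ≤ M)
    (hg : IntervalIntegrable g volume a b)
    (hg0 : ∀ x ∈ Set.Icc a b, 0 ≤ g x)
    (hgsymm : ∀ x ∈ Set.Icc a b, g x = g (a + b - x)) :
    m / 8 * ∫ t in a..b, (2 * t - a - b) ^ 2 * g t
        ≤ (∫ t in a..b, f t * g t) - f ((a + b) / 2) * ∫ t in a..b, g t ∧
    (∫ t in a..b, f t * g t) - f ((a + b) / 2) * (∫ t in a..b, g t)
        ≤ M / 8 * ∫ t in a..b, (2 * t - a - b) ^ 2 * g t := by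
  set c : ℝ := (a + b) / 2 with hcdef
  have hab' : a ≤ b := hab.le
  have huIcc : Set.uIcc a b = Set.Icc a b := Set.uIcc_of_le hab'
  have hc : c ∈ Set.Icc a b := ⟨by simp [hcdef]; linarith, by simp [hcdef]; linarith⟩
  have hfc : ContinuousOn f (Set.uIcc a b) := by
    rw [huIcc]; exact fun x hx => (hf' x hx).continuousWithinAt
  -- integrability facts
  have hIfg : IntervalIntegrable (fun t => f t * g t) volume a b :=
    hg.continuousOn_mul hfc
  have hItaylor : IntervalIntegrable (fun t => (f t - f c - f' c * (t - c)) * g t) volume a b :=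
    hg.continuousOn_mul (by fun_prop)
  have hIsq : IntervalIntegrable (fun t => (t - c) ^ 2 * g t) volume a b :=
    hg.continuousOn_mul (by fun_prop)
  have hIsq2 : IntervalIntegrable (fun t => (2 * t - a - b) ^ 2 * g t) volume a b :=
    hg.continuousOn_mul (by fun_prop)
  have hIlin : IntervalIntegrable (fun t => (t - c) * g t) volume a b :=
    hg.continuousOn_mul (by fun_prop)
  -- the odd term integrates to zero
  have hodd : (∫ t in a..b, (t - c) * g t) = 0 := by
    have h1 : (∫ x in a..b, ((a + b - x) - c) * g (a + b - x))
        = ∫ t in a..b, (t - c) * g t := by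
      have := intervalIntegral.integral_comp_sub_left (a := a) (b := b)
        (fun x => (x - c) * g x) (a + b)
      simpa using this
    have h2 : (∫ x in a..b, ((a + b - x) - c) * g (a + b - x))
        = ∫ t in a..b, -((t - c) * g t) := by
      apply intervalIntegral.integral_congr
      intro x hx
      rw [huIcc] at hx
      have := hgsymm x hx
      simp only []
      rw [← this, hcdef]
      ring
    rw [h2, intervalIntegral.integral_neg] at h1
    linarith
  -- rewrite the middle term
  have hmid : (∫ t in a..b, f t * g t) - f c * (∫ t in a..b, g t)
      = ∫ t in a..b, (f t - f c - f' c * (t - c)) * g t := by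
    have e1 : (∫ t in a..b, (f t - f c - f' c * (t - c)) * g t)
        = (∫ t in a..b, f t * g t) - (∫ t in a..b, f c * g t)
          - f' c * (∫ t in a..b, (t - c) * g t) := by
      rw [← intervalIntegral.integral_const_mul]
      rw [← intervalIntegral.integral_sub hIfg (hg.continuousOn_mul (by fun_prop)),
        ← intervalIntegral.integral_sub
          (hIfg.sub (hg.continuousOn_mul (by fun_prop)))
          (hIlin.const_mul (f' c))]
      apply intervalIntegral.integral_congr
      intro x _; ring
    rw [e1, hodd, intervalIntegral.integral_const_mul]
    ring
  -- bounds
  have hbd := taylor_bounds_aux hc hf' hf'' hm hM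
  have hlow : (∫ t in a..b, m / 2 * ((t - c) ^ 2 * g t))
      ≤ ∫ t in a..b, (f t - f c - f' c * (t - c)) * g t := by
    apply intervalIntegral.integral_mono_on hab' (hIsq.const_mul _) hItaylor
    intro x hx
    have := (hbd x hx).1
    have hgx := hg0 x hx
    nlinarith
  have hhigh : (∫ t in a..b, (f t - f c - f' c * (t - c)) * g t)
      ≤ ∫ t in a..b, M / 2 * ((t - c) ^ 2 * g t) := by
    apply intervalIntegral.integral_mono_on hab' hItaylor (hIsq.const_mul _)
    intro x hx
    have := (hbd x hx).2
    have hgx := hg0 x hx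
    nlinarith
  -- relate the quadratic integrals
  have hquad : (∫ t in a..b, (2 * t - a - b) ^ 2 * g t)
      = 4 * ∫ t in a..b, (t - c) ^ 2 * g t := by
    rw [← intervalIntegral.integral_const_mul]
    apply intervalIntegral.integral_congr
    intro x _
    rw [hcdef]; ring
  rw [intervalIntegral.integral_const_mul] at hlow hhigh
  constructor
  · rw [hmid, hquad]; linarith
  · rw [hmid, hquad]; linarith
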